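/- Define F : ℝ → ℝ² by F(θ) = (θ - 2βcθ·D(θ), βθ² + c·D(θ)) with constants β > 0, c > 0 and D(θ) = 1/√(1+4β²θ²). If 2βc > 1, then the first component f₁(θ) = θ(1 - 2βc·D(θ)) is not injective on ℝ: f₁ is odd, f₁(0) = 0, f₁(θ) < 0 for small θ > 0, and f₁(θ) → +∞ as θ → +∞, so there exists θ* > 0 with f₁(θ*) = 0 = f₁(0), i.e., the map exhibits a fold (non-invertibility) in its first coordinate. -/

import Mathlib

open Filter

/-- For `F(θ) = (θ - 2βcθD(θ), βθ² + cD(θ))` with `2βc > 1`, the first component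
`f₁(θ) = θ(1 - 2βc D(θ))` is odd, vanishes at `0`, is negative for small `θ > 0`,
tends to `+∞`, has a positive zero, and is not injective. -/
theorem stmt_11 (β c : ℝ) (hβ : 0 < β) (hc : 0 < c) (h : 1 < 2 * β * c) :
    let D : ℝ → ℝ := fun θ => 1 / Real.sqrt (1 + 4 * β ^ 2 * θ ^ 2)
    let f₁ : ℝ → ℝ := fun θ => θ * (1 - 2 * β * c * D θ)
    (∀ θ : ℝ, f₁ (-θ) = -f₁ θ) ∧
    f₁ 0 = 0 ∧
    (∃ δ > (0 : ℝ), ∀ θ : ℝ, 0 < θ → θ < δ → f₁ θ < 0) ∧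
    Tendsto f₁ atTop atTop ∧
    (∃ θstar > (0 : ℝ), f₁ θstar = 0) ∧
    ¬ Function.Injective f₁ := by
  intro D f₁
  have h2βc : (0:ℝ) < 2 * β * c := by positivity
  have hpos : ∀ θ : ℝ, (0:ℝ) < 1 + 4 * β ^ 2 * θ ^ 2 := fun θ => by positivity
  have hsq : ∀ θ : ℝ, 0 < Real.sqrt (1 + 4 * β ^ 2 * θ ^ 2) :=
    fun θ => Real.sqrt_pos.2 (hpos θ)
  have h1 : (0:ℝ) < (2 * β * c) ^ 2 - 1 := by nlinarith
  set θs : ℝ := Real.sqrt ((2 * β * c) ^ 2 - 1) / (2 * β) with hθsdef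
  have hθspos : 0 < θs := div_pos (Real.sqrt_pos.2 h1) (by positivity)
  have hkey : Real.sqrt (1 + 4 * β ^ 2 * θs ^ 2) = 2 * β * c := by
    have hs : Real.sqrt ((2 * β * c) ^ 2 - 1) ^ 2 = (2 * β * c) ^ 2 - 1 :=
      Real.sq_sqrt h1.le
    have harg : 1 + 4 * β ^ 2 * θs ^ 2 = (2 * β * c) ^ 2 := by
      rw [hθsdef, div_pow, hs]
      field_simp
      ring
    rw [harg, Real.sqrt_sq h2βc.le]
  have hfθs : f₁ θs = 0 := by
    simp only [f₁, D, hkey]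
    field_simp
    ring
  refine ⟨?_, ?_, ?_, ?_, ?_, ?_⟩
  · intro θ
    simp only [f₁, D, neg_sq]
    ring
  · simp [f₁]
  · refine ⟨θs, hθspos, fun θ hθ hθδ => ?_⟩
    have hlt : Real.sqrt (1 + 4 * β ^ 2 * θ ^ 2) < 2 * β * c := by
      rw [← hkey]
      apply Real.sqrt_lt_sqrt (hpos θ).le
      have hθ2 : θ ^ 2 < θs ^ 2 := by nlinarith
      have hb := mul_pos (pow_pos hβ 2) (sub_pos.2 hθ2)
      nlinarith
    have hD : 1 < 2 * β * c * D θ := by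
      have := hsq θ
      rw [show (2 * β * c * D θ) = (2 * β * c) / Real.sqrt (1 + 4 * β ^ 2 * θ ^ 2) by
        simp [D]; ring]
      exact (one_lt_div this).2 hlt
    have : 1 - 2 * β * c * D θ < 0 := by linarith
    exact mul_neg_of_pos_of_neg hθ this
  · apply tendsto_atTop_mono' _ _ (tendsto_atTop_add_const_right _ (-c) tendsto_id)
    filter_upwards [eventually_ge_atTop (0:ℝ)] with θ hθ
    have hs := hsq θ
    have hle : 2 * β * θ ≤ Real.sqrt (1 + 4 * β ^ 2 * θ ^ 2) := by
      rw [show (2 * β * θ) = Real.sqrt ((2 * β * θ)^2) by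
        rw [Real.sqrt_sq (by positivity)]]
      apply Real.sqrt_le_sqrt
      nlinarith
    have : 2 * β * c * D θ * θ ≤ c := by
      simp only [D]
      rw [mul_one_div, div_mul_eq_mul_div, div_le_iff₀ hs]
      nlinarith
    simp only [f₁, id]
    nlinarith
  · exact ⟨θs, hθspos, hfθs⟩
  · intro hinj
    have : θs = 0 := hinj (by simpa [f₁] using hfθs)
    exact hθspos.ne' this
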